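/- For the Wishart family W_p(W | S, n) locally parameterized by S = 2(f(b_t+δ)+c)·B_t Exp(M) Exp(M)ᵀ B_tᵀ and n = 2(f(b_t+δ)+c) with c = (p−1)/2, the mixed Fisher information block between δ and M vanishes at (δ, M) = 0, using that E[W] = n S⁻¹ so that E[B_tᵀ W B_t] = I at the evaluation point. -/

import Mathlib

set_option linter.unnecessarySimpa false
set_option maxHeartbeats 1000000
open Matrix MeasureTheory Real

private lemma exp_of_sq_zero {p : ℕ} (A : Matrix (Fin p) (Fin p) ℝ) (h : A * A = 0) :
    NormedSpace.exp A = 1 + A := by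
  letI : SeminormedRing (Matrix (Fin p) (Fin p) ℝ) := Matrix.linftyOpSemiNormedRing
  letI : NormedRing (Matrix (Fin p) (Fin p) ℝ) := Matrix.linftyOpNormedRing
  letI : NormedAlgebra ℝ (Matrix (Fin p) (Fin p) ℝ) := Matrix.linftyOpNormedAlgebra
  rw [NormedSpace.exp_eq_tsum ℝ]
  have hpow : ∀ n ∉ Finset.range 2, ((Nat.factorial n : ℝ)⁻¹ • A ^ n) = 0 := by
    intro n hn
    simp only [Finset.mem_range, not_lt] at hn
    obtain ⟨k, rfl⟩ := Nat.exists_eq_add_of_le hn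
    rw [pow_add, pow_two, h, zero_mul, smul_zero]
  rw [show (fun x : Matrix (Fin p) (Fin p) ℝ => ∑' n : ℕ, (Nat.factorial n : ℝ)⁻¹ • x ^ n) A
      = ∑' n : ℕ, (Nat.factorial n : ℝ)⁻¹ • A ^ n from rfl, tsum_eq_sum hpow]
  simp [Finset.sum_range_succ]

private lemma exp_of_idem {p : ℕ} (A : Matrix (Fin p) (Fin p) ℝ) (h : A * A = A) (t : ℝ) :
    NormedSpace.exp (t • A) = 1 + (Real.exp t - 1) • A := by
  letI : SeminormedRing (Matrix (Fin p) (Fin p) ℝ) := Matrix.linftyOpSemiNormedRing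
  letI : NormedRing (Matrix (Fin p) (Fin p) ℝ) := Matrix.linftyOpNormedRing
  letI : NormedAlgebra ℝ (Matrix (Fin p) (Fin p) ℝ) := Matrix.linftyOpNormedAlgebra
  have hA : ∀ n : ℕ, A ^ (n + 1) = A := by
    intro n; induction n with
    | zero => simp
    | succ k ih => rw [pow_succ, ih, h]
  have hterm : ∀ n : ℕ, (Nat.factorial (n+1) : ℝ)⁻¹ • (t • A) ^ (n+1)
      = ((Nat.factorial (n+1) : ℝ)⁻¹ * t ^ (n+1)) • A := by
    intro n
    rw [smul_pow, hA, smul_smul]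
  have hsum : Summable fun n : ℕ => (Nat.factorial n : ℝ)⁻¹ • (t • A) ^ n :=
    NormedSpace.expSeries_summable' (𝕂 := ℝ) (t • A)
  rw [NormedSpace.exp_eq_tsum ℝ]
  rw [show (fun x : Matrix (Fin p) (Fin p) ℝ => ∑' n : ℕ, (Nat.factorial n : ℝ)⁻¹ • x ^ n) (t • A)
      = ∑' n : ℕ, (Nat.factorial n : ℝ)⁻¹ • (t • A) ^ n from rfl]
  rw [Summable.tsum_eq_zero_add hsum]
  simp only [hterm, pow_zero, Nat.factorial_zero]
  have hscal : Summable fun n : ℕ => (Nat.factorial (n+1) : ℝ)⁻¹ * t ^ (n+1) := by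
    have h2 : Summable fun n : ℕ => t ^ n / (Nat.factorial n : ℝ) :=
      Real.summable_pow_div_factorial t
    have := (summable_nat_add_iff 1).mpr h2
    simpa [div_eq_inv_mul, mul_comm] using this
  rw [Summable.tsum_smul_const]
  · congr 1
    · simp
    · congr 1
      have hexp : Real.exp t = ∑' n : ℕ, t ^ n / (Nat.factorial n : ℝ) := by
        rw [Real.exp_eq_exp_ℝ, NormedSpace.exp_eq_tsum_div]
      rw [hexp, Summable.tsum_eq_zero_add (Real.summable_pow_div_factorial t)]
      simp [div_eq_inv_mul, mul_comm]
  · exact hscal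

private lemma det_exp_std {p : ℕ} (i j : Fin p) (t : ℝ) :
    (NormedSpace.exp (t • Matrix.single i j (1:ℝ))).det
      = Real.exp (t * (if i = j then 1 else 0)) := by
  rcases eq_or_ne i j with rfl | hij
  · rw [exp_of_idem _ (by simpa using Matrix.single_mul_single_same (c := (1:ℝ)) i i i 1) t]
    have h : (1 + (Real.exp t - 1) • Matrix.single i i (1:ℝ))
        = Matrix.diagonal (fun a => if a = i then Real.exp t else 1) := by
      ext a b
      rcases eq_or_ne a b with rfl | hab
      · by_cases ha : a = i
        · subst ha; simp [Matrix.single, Matrix.one_apply]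
        · simp [Matrix.single, Matrix.one_apply, ha, Ne.symm ha]
      · have h1 : ¬(i = a ∧ i = b) := fun hc => hab (hc.1.symm.trans hc.2)
        simp [Matrix.diagonal_apply_ne _ hab, Matrix.single, Matrix.one_apply, hab, h1]
    rw [h, Matrix.det_diagonal]
    simp [Finset.prod_ite_eq']
  · have h0 : (t • Matrix.single i j (1:ℝ)) * (t • Matrix.single i j 1) = 0 := by
      rw [Matrix.smul_mul, Matrix.mul_smul,
        Matrix.single_mul_single_of_ne (h := Ne.symm hij)]
      simp
    rw [exp_of_sq_zero _ h0]
    have h : ((1:Matrix (Fin p) (Fin p) ℝ) + t • Matrix.single i j (1:ℝ))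
        = Matrix.updateRow 1 i ((1 : Matrix (Fin p) (Fin p) ℝ) i
            + t • (1 : Matrix (Fin p) (Fin p) ℝ) j) := by
      ext a b
      by_cases ha : a = i
      · subst ha
        simp [Matrix.updateRow_self, Matrix.single, Matrix.one_apply, eq_comm]
      · simp only [Matrix.add_apply, Matrix.smul_apply, Matrix.single,
          Matrix.updateRow_ne ha, Matrix.of_apply, smul_eq_mul, mul_ite, mul_one, mul_zero]
        have : ¬(i = a ∧ j = b) := fun hc => ha hc.1.symm
        simp [this]
    rw [h, Matrix.det_updateRow_add_smul_self _ hij, Matrix.det_one, if_neg hij]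
    simp


open Matrix MeasureTheory Real

/-- Partial derivative of `f` with respect to the `(i,j)` entry of a matrix at `M`. -/
noncomputable def mderiv {p : ℕ} (i j : Fin p)
    (f : Matrix (Fin p) (Fin p) ℝ → ℝ) (M : Matrix (Fin p) (Fin p) ℝ) : ℝ :=
  deriv (fun t => f (Matrix.of fun a b => if a = i ∧ b = j then t else M a b)) (M i j)

/-- Degrees of freedom `n(δ) = 2(f(b_t + δ) + c)` with `f` the softplus and
`c = (p−1)/2`. -/
noncomputable def wishartN (p : ℕ) (bt δ : ℝ) : ℝ :=
  2 * (Real.log (1 + Real.exp (bt + δ)) + ((p : ℝ) - 1) / 2)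

/-- Scale parameter `S(δ, M) = n(δ) · B Exp(M) Exp(M)ᵀ Bᵀ`. -/
noncomputable def wishartS {p : ℕ} (bt : ℝ) (B : Matrix (Fin p) (Fin p) ℝ)
    (δ : ℝ) (M : Matrix (Fin p) (Fin p) ℝ) : Matrix (Fin p) (Fin p) ℝ :=
  wishartN p bt δ • (B * NormedSpace.exp M * (NormedSpace.exp M)ᵀ * Bᵀ)

/-- Log-density of the Wishart `W_p(W | S(δ,M), n(δ))`, with an arbitrary
normalizing function `Z` of `n`. -/
noncomputable def wishartLogDensity {p : ℕ} (bt : ℝ) (B : Matrix (Fin p) (Fin p) ℝ)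
    (Z : ℝ → ℝ) (δ : ℝ) (M : Matrix (Fin p) (Fin p) ℝ)
    (W : Matrix (Fin p) (Fin p) ℝ) : ℝ :=
  -(1/2 : ℝ) * (wishartS bt B δ M * W).trace
    + ((wishartN p bt δ - (p : ℝ) - 1) / 2) * Real.log W.det
    + (wishartN p bt δ / 2) * Real.log ((wishartS bt B δ M).det)
    - Real.log (Z (wishartN p bt δ))


private lemma trace_conj {p : ℕ} (B P W : Matrix (Fin p) (Fin p) ℝ) :
    ((B * P * Bᵀ) * W).trace = (P * (Bᵀ * (W * B))).trace := by
  rw [show (B * P * Bᵀ) * W = B * (P * (Bᵀ * W)) by simp only [Matrix.mul_assoc],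
    Matrix.trace_mul_comm,
    show (P * (Bᵀ * W)) * B = P * (Bᵀ * (W * B)) by simp only [Matrix.mul_assoc]]

private lemma wishartN_pos {p : ℕ} (hp : 0 < p) (bt δ : ℝ) : 0 < wishartN p bt δ := by
  have h1 : 0 < Real.log (1 + Real.exp (bt + δ)) :=
    Real.log_pos (by linarith [Real.exp_pos (bt + δ)])
  have h2 : (1:ℝ) ≤ (p:ℝ) := by exact_mod_cast hp
  rw [wishartN]; nlinarith

private lemma mderiv_zero_eq_deriv {p : ℕ} (i j : Fin p) (f : Matrix (Fin p) (Fin p) ℝ → ℝ) :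
    mderiv i j f 0 = deriv (fun t : ℝ => f (t • Matrix.single i j 1)) 0 := by
  have hpath : ∀ t : ℝ, (Matrix.of fun a b =>
      if a = i ∧ b = j then t else (0 : Matrix (Fin p) (Fin p) ℝ) a b)
        = t • Matrix.single i j (1:ℝ) := by
    intro t; ext a b
    by_cases h : a = i ∧ b = j
    · obtain ⟨rfl, rfl⟩ := h
      simp [Matrix.single]
    · have h' : ¬(i = a ∧ j = b) := fun hc => h ⟨hc.1.symm, hc.2.symm⟩
      simp only [Matrix.of_apply, if_neg h, Matrix.zero_apply, Matrix.smul_apply,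
        Matrix.single, smul_eq_mul, mul_ite, mul_one, mul_zero]
      simp [h']
  rw [mderiv, Matrix.zero_apply]
  congr 1
  funext t
  rw [hpath t]

private lemma mderiv_eq {p : ℕ} (bt : ℝ) (B : Matrix (Fin p) (Fin p) ℝ)
    (hB : IsUnit B) (Z : ℝ → ℝ) (i j : Fin p) (W : Matrix (Fin p) (Fin p) ℝ) (δ : ℝ) :
    mderiv i j (fun M => wishartLogDensity bt B Z δ M W) 0
      = wishartN p bt δ *
        ((if i = j then (1:ℝ) else 0)
          - (1/2) * ((B * (Matrix.single i j 1
              + (Matrix.single i j 1)ᵀ) * Bᵀ) * W).trace) := by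
  classical
  have hp : 0 < p := i.pos
  set E : Matrix (Fin p) (Fin p) ℝ := Matrix.single i j 1 with hEdef
  set ind : ℝ := if i = j then (1:ℝ) else 0 with hind
  set n : ℝ := wishartN p bt δ with hndef
  have hn : 0 < n := wishartN_pos hp bt δ
  have hdB : B.det ≠ 0 := by
    have := (Matrix.isUnit_iff_isUnit_det B).mp hB
    exact this.ne_zero
  set C : Matrix (Fin p) (Fin p) ℝ := Bᵀ * (W * B) with hC
  set Kd : ℝ := n ^ p * B.det ^ 2 with hKd
  have hKdpos : 0 < Kd := by
    have : (0:ℝ) < B.det ^ 2 := by positivity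
    exact mul_pos (pow_pos hn p) this
  -- determinant of wishartS along the path
  have hdetS : ∀ t : ℝ, (wishartS bt B δ (t • E)).det = Kd * Real.exp (t * ind) ^ 2 := by
    intro t
    rw [wishartS, Matrix.det_smul, Matrix.det_mul, Matrix.det_mul, Matrix.det_mul,
      Matrix.det_transpose, Matrix.det_transpose, Fintype.card_fin, ← hndef]
    rw [hEdef, det_exp_std i j t, ← hind, hKd]
    ring
  -- trace along the path
  have htr : ∀ t : ℝ, (wishartS bt B δ (t • E) * W).trace
      = n * ((NormedSpace.exp (t • E) * (NormedSpace.exp (t • E))ᵀ) * C).trace := by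
    intro t
    rw [wishartS, Matrix.smul_mul, Matrix.trace_smul, ← hndef, smul_eq_mul]
    congr 1
    rw [show B * NormedSpace.exp (t • E) * (NormedSpace.exp (t • E))ᵀ * Bᵀ
        = B * (NormedSpace.exp (t • E) * (NormedSpace.exp (t • E))ᵀ) * Bᵀ by
      simp only [Matrix.mul_assoc]]
    exact trace_conj B _ W
  -- the path function equality
  have hfun : (fun t : ℝ => wishartLogDensity bt B Z δ (t • E) W)
      = fun t : ℝ => -(1/2) * (n * ((NormedSpace.exp (t • E)
            * (NormedSpace.exp (t • E))ᵀ) * C).trace)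
          + ((n - (p:ℝ) - 1) / 2) * Real.log W.det
          + (n / 2) * (Real.log Kd + 2 * (t * ind))
          - Real.log (Z n) := by
    funext t
    rw [wishartLogDensity, htr t, hdetS t, ← hndef]
    congr 2
    rw [Real.log_mul (ne_of_gt hKdpos) (by positivity), Real.log_pow, Real.log_exp]
    push_cast
    ring
  -- derivative of the path function at 0
  have hD1 : HasDerivAt (fun t : ℝ =>
      ((NormedSpace.exp (t • E) * (NormedSpace.exp (t • E))ᵀ) * C).trace)
      (((E + Eᵀ) * C).trace) 0 := by
    letI : SeminormedRing (Matrix (Fin p) (Fin p) ℝ) := Matrix.linftyOpSemiNormedRing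
    letI : NormedRing (Matrix (Fin p) (Fin p) ℝ) := Matrix.linftyOpNormedRing
    letI : NormedAlgebra ℝ (Matrix (Fin p) (Fin p) ℝ) := Matrix.linftyOpNormedAlgebra
    have h1 : HasDerivAt (fun t : ℝ => NormedSpace.exp (t • E)) E 0 := by
      have := hasDerivAt_exp_smul_const' (𝕂 := ℝ) E (0:ℝ)
      simp only [zero_smul, NormedSpace.exp_zero, mul_one] at this
      exact this
    have h2 : HasDerivAt (fun t : ℝ => (NormedSpace.exp (t • E))ᵀ) Eᵀ 0 := by
      have h2' : (fun t : ℝ => (NormedSpace.exp (t • E))ᵀ)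
          = fun t : ℝ => NormedSpace.exp (t • Eᵀ) := by
        funext t
        rw [← Matrix.exp_transpose, Matrix.transpose_smul]
      rw [h2']
      have := hasDerivAt_exp_smul_const' (𝕂 := ℝ) Eᵀ (0:ℝ)
      simp only [zero_smul, NormedSpace.exp_zero, mul_one] at this
      exact this
    have h3 : HasDerivAt (fun t : ℝ => NormedSpace.exp (t • E)
        * (NormedSpace.exp (t • E))ᵀ) (E + Eᵀ) 0 := by
      have := h1.mul h2
      simp only [zero_smul, NormedSpace.exp_zero, Matrix.transpose_one, mul_one, one_mul] at this
      exact this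
    let L : Matrix (Fin p) (Fin p) ℝ →ₗ[ℝ] ℝ :=
      (Matrix.traceLinearMap (Fin p) ℝ ℝ).comp (LinearMap.mulRight ℝ C)
    let Lc := LinearMap.toContinuousLinearMap L
    have h4 := Lc.hasFDerivAt.comp_hasDerivAt 0 h3
    simp only [Lc, L, Function.comp_def, LinearMap.coe_toContinuousLinearMap', LinearMap.coe_comp,
      Matrix.traceLinearMap_apply, LinearMap.mulRight_apply] at h4
    exact h4
  have hD2 : HasDerivAt (fun t : ℝ => Real.log Kd + 2 * (t * ind)) (2 * ind) 0 := by
    have : HasDerivAt (fun t : ℝ => t * ind) ind 0 := by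
      simpa using (hasDerivAt_id (0:ℝ)).mul_const ind
    simpa using (this.const_mul 2).const_add (Real.log Kd)
  have hD : HasDerivAt (fun t : ℝ => wishartLogDensity bt B Z δ (t • E) W)
      (-(1/2) * (n * ((E + Eᵀ) * C).trace) + (n / 2) * (2 * ind)) 0 := by
    rw [hfun]
    exact ((((hD1.const_mul n).const_mul (-(1/2))).add_const
        (((n - (p:ℝ) - 1) / 2) * Real.log W.det)).add (hD2.const_mul (n/2))).sub_const
        (Real.log (Z n))
  rw [mderiv_zero_eq_deriv i j _, ← hEdef, hD.deriv]
  have htr2 : ((E + Eᵀ) * C).trace = ((B * (E + Eᵀ) * Bᵀ) * W).trace :=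
    (trace_conj B (E + Eᵀ) W).symm
  rw [htr2]
  ring

private lemma posdef_abs_entry_le {p : ℕ} (M : Matrix (Fin p) (Fin p) ℝ) (hM : M.PosDef)
    (a b : Fin p) (hab : a ≠ b) : |M a b| ≤ |(1/2) * (M a a + M b b)| := by
  have hsym : M a b = M b a := by
    have := congrFun (congrFun hM.isHermitian a) b
    simpa [Matrix.conjTranspose_apply] using this.symm
  have hq : ∀ x : Fin p → ℝ, x ≠ 0 → 0 < x ⬝ᵥ (M *ᵥ x) := by
    intro x hx
    simpa [star_trivial] using hM.dotProduct_mulVec_pos hx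
  have key : ∀ (s : ℝ), s = 1 ∨ s = -1 →
      0 < M a a + s * (M a b + M b a) + s * s * M b b := by
    intro s hs
    set x : Fin p → ℝ := (Pi.single a 1 : Fin p → ℝ) + s • (Pi.single b 1 : Fin p → ℝ)
      with hxdef
    have hx : x ≠ 0 := by
      intro hc
      have := congrFun hc a
      simp [hxdef, Pi.single_apply, hab] at this
    have h := hq _ hx
    have hv : x ⬝ᵥ (M *ᵥ x) = M a a + s * (M a b + M b a) + s * s * M b b := by
      simp only [hxdef, Matrix.mulVec_add, Matrix.mulVec_smul, Matrix.mulVec_single,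
        add_dotProduct, smul_dotProduct, single_dotProduct,
        dotProduct_add, dotProduct_smul, smul_eq_mul, Pi.add_apply, Pi.smul_apply,
        Pi.single_apply, hab]
      simp [hab, Ne.symm hab]
      ring
    linarith [hv ▸ h]
  have h1 := key 1 (Or.inl rfl)
  have h2 := key (-1) (Or.inr rfl)
  have haa : 0 < M a a := by
    have hx : (Pi.single a 1 : Fin p → ℝ) ≠ 0 := by
      intro hc; have := congrFun hc a; simp [Pi.single_eq_same] at this
    have h := hq _ hx
    simpa [Matrix.mulVec_single, single_dotProduct] using h
  have hbb : 0 < M b b := by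
    have hx : (Pi.single b 1 : Fin p → ℝ) ≠ 0 := by
      intro hc; have := congrFun hc b; simp [Pi.single_eq_same] at this
    have h := hq _ hx
    simpa [Matrix.mulVec_single, single_dotProduct] using h
  have habs : |(1/2) * (M a a + M b b)| = (1/2) * (M a a + M b b) :=
    abs_of_pos (by linarith)
  rw [habs, abs_le]
  constructor <;> nlinarith

/-- For the Wishart family locally parameterized by
`S = 2(f(b_t+δ)+c) · B_t Exp(M) Exp(M)ᵀ B_tᵀ`, `n = 2(f(b_t+δ)+c)`, the mixed
Fisher information block between `δ` and `M` vanishes at `(δ, M) = 0`, using that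
`E[W] = n S⁻¹` at the evaluation point. -/
theorem wishart_fisher_mixed_block_vanishes {p : ℕ} (bt : ℝ)
    (B : Matrix (Fin p) (Fin p) ℝ) (hB : IsUnit B)
    (μ : Measure (Fin p → Fin p → ℝ)) [IsProbabilityMeasure μ]
    (hsupp : ∀ᵐ W ∂μ, (Matrix.of W).PosDef)
    (hE : ∀ a b : Fin p,
      (∫ W, W a b ∂μ) = (wishartN p bt 0 • (wishartS bt B 0 0)⁻¹) a b)
    (Z : ℝ → ℝ) (i j : Fin p) :
    ∫ W, deriv
        (fun δ => mderiv i j (fun M => wishartLogDensity bt B Z δ M (Matrix.of W)) 0) 0 ∂μ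
      = 0 := by
  classical
  have hp : 0 < p := i.pos
  have hBdet : IsUnit B.det := (Matrix.isUnit_iff_isUnit_det B).mp hB
  have hBtdet : IsUnit (Bᵀ).det := by rwa [Matrix.det_transpose]
  have hn0 : wishartN p bt 0 ≠ 0 := ne_of_gt (wishartN_pos hp bt 0)
  -- derivative of n in δ
  have hnder : HasDerivAt (fun δ => wishartN p bt δ)
      (2 * ((1 + Real.exp bt)⁻¹ * Real.exp bt)) 0 := by
    have h0 : HasDerivAt (fun δ : ℝ => bt + δ) 1 0 := by
      simpa using (hasDerivAt_id (0:ℝ)).const_add bt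
    have h1 : HasDerivAt (fun δ : ℝ => Real.exp (bt + δ)) (Real.exp bt) 0 := by
      have := (Real.hasDerivAt_exp (bt + 0)).comp 0 h0
      simpa [Function.comp_def] using this
    have h2 : HasDerivAt (fun δ : ℝ => 1 + Real.exp (bt + δ)) (Real.exp bt) 0 :=
      h1.const_add 1
    have h3 : HasDerivAt (fun δ : ℝ => Real.log (1 + Real.exp (bt + δ)))
        ((1 + Real.exp bt)⁻¹ * Real.exp bt) 0 := by
      have hpos : (0:ℝ) < 1 + Real.exp (bt + 0) := by positivity
      have := (Real.hasDerivAt_log (ne_of_gt hpos)).comp 0 h2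
      simpa [Function.comp_def] using this
    have h4 := (h3.add_const (((p:ℝ) - 1) / 2)).const_mul 2
    simpa [wishartN] using h4
  -- rewrite the integrand
  have hintgd : (fun W : Fin p → Fin p → ℝ => deriv
        (fun δ => mderiv i j (fun M => wishartLogDensity bt B Z δ M (Matrix.of W)) 0) 0)
      = fun W => (2 * ((1 + Real.exp bt)⁻¹ * Real.exp bt)) *
          ((if i = j then (1:ℝ) else 0) - (1/2) * (((B * (Matrix.single i j (1:ℝ)
              + (Matrix.single i j (1:ℝ))ᵀ) * Bᵀ) * Matrix.of W).trace)) := by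
    funext W
    have hfun : (fun δ => mderiv i j (fun M => wishartLogDensity bt B Z δ M (Matrix.of W)) 0)
        = fun δ => wishartN p bt δ * ((if i = j then (1:ℝ) else 0)
            - (1/2) * (((B * (Matrix.single i j (1:ℝ)
                + (Matrix.single i j (1:ℝ))ᵀ) * Bᵀ) * Matrix.of W).trace)) := by
      funext δ
      exact mderiv_eq bt B hB Z i j (Matrix.of W) δ
    rw [hfun]
    exact (hnder.mul_const _).deriv
  rw [hintgd]
  -- the mean matrix
  have hSinv : wishartN p bt 0 • (wishartS bt B 0 0)⁻¹ = (Bᵀ)⁻¹ * B⁻¹ := by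
    have hS0 : wishartS bt B 0 0 = wishartN p bt 0 • (B * Bᵀ) := by
      rw [wishartS, NormedSpace.exp_zero, Matrix.transpose_one, mul_one, mul_one]
    have hinv : (wishartS bt B 0 0)⁻¹ = (wishartN p bt 0)⁻¹ • ((Bᵀ)⁻¹ * B⁻¹) := by
      rw [hS0]
      apply Matrix.inv_eq_right_inv
      rw [Matrix.smul_mul, Matrix.mul_smul, smul_smul]
      rw [show (B * Bᵀ) * ((Bᵀ)⁻¹ * B⁻¹) = B * (Bᵀ * (Bᵀ)⁻¹) * B⁻¹ by
        simp only [Matrix.mul_assoc], Matrix.mul_nonsing_inv _ hBtdet, mul_one,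
        Matrix.mul_nonsing_inv _ hBdet, mul_inv_cancel₀ hn0, one_smul]
    rw [hinv, smul_smul, mul_inv_cancel₀ hn0, one_smul]
  have hE' : ∀ a b : Fin p, (∫ W, W a b ∂μ) = ((Bᵀ)⁻¹ * B⁻¹) a b := by
    intro a b; rw [hE a b, hSinv]
  -- integrability of the entries
  have hmeas : ∀ a b : Fin p, AEStronglyMeasurable (fun W : Fin p → Fin p → ℝ => W a b) μ :=
    fun a b => (((continuous_apply b).comp (continuous_apply a)).aestronglyMeasurable)
  have hdiag : ∀ a : Fin p, Integrable (fun W : Fin p → Fin p → ℝ => W a a) μ := by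
    intro a
    by_contra hcon
    have h0 : ∫ W, W a a ∂μ = 0 := integral_undef hcon
    have hcontr := hE' a a
    rw [h0] at hcontr
    have hentry : ((Bᵀ)⁻¹ * B⁻¹) a a = ∑ k, (B⁻¹ k a)^2 := by
      rw [← Matrix.transpose_nonsing_inv, Matrix.mul_apply]
      refine Finset.sum_congr rfl fun k _ => ?_
      rw [Matrix.transpose_apply, sq]
    rw [hentry] at hcontr
    have hz : ∀ k ∈ Finset.univ, (B⁻¹ k a)^2 = 0 :=
      (Finset.sum_eq_zero_iff_of_nonneg (fun x _ => sq_nonneg _)).mp hcontr.symm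
    have hz' : ∀ k, B⁻¹ k a = 0 := fun k =>
      pow_eq_zero_iff two_ne_zero |>.mp (hz k (Finset.mem_univ k))
    have hdet0 : (B⁻¹).det = 0 := Matrix.det_eq_zero_of_column_eq_zero a hz'
    have hmulinv := Matrix.nonsing_inv_mul B hBdet
    have hd := congrArg Matrix.det hmulinv
    rw [Matrix.det_mul, hdet0, Matrix.det_one, zero_mul] at hd
    exact zero_ne_one hd
  have hall : ∀ a b : Fin p, Integrable (fun W : Fin p → Fin p → ℝ => W a b) μ := by
    intro a b
    rcases eq_or_ne a b with rfl | hab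
    · exact hdiag a
    · refine Integrable.mono (((hdiag a).add (hdiag b)).const_mul (1/2)) (hmeas a b) ?_
      filter_upwards [hsupp] with W hW
      rw [Real.norm_eq_abs, Real.norm_eq_abs]
      exact posdef_abs_entry_le (Matrix.of W) hW a b hab
  -- the trace integrand
  have htrsum : (fun W : Fin p → Fin p → ℝ => (((B * (Matrix.single i j (1:ℝ)
          + (Matrix.single i j (1:ℝ))ᵀ) * Bᵀ) * Matrix.of W).trace))
      = fun W => ∑ a : Fin p, ∑ b : Fin p, (B * (Matrix.single i j (1:ℝ)
          + (Matrix.single i j (1:ℝ))ᵀ) * Bᵀ) a b * W b a := by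
    funext W
    rw [Matrix.trace]
    simp [Matrix.diag, Matrix.mul_apply]
  have hint_sum : ∀ a : Fin p, Integrable (fun W : Fin p → Fin p → ℝ =>
      ∑ b : Fin p, (B * (Matrix.single i j (1:ℝ)
          + (Matrix.single i j (1:ℝ))ᵀ) * Bᵀ) a b * W b a) μ :=
    fun a => integrable_finset_sum _ (fun b _ => (hall b a).const_mul _)
  have htr_int : Integrable (fun W : Fin p → Fin p → ℝ =>
      (((B * (Matrix.single i j (1:ℝ)
          + (Matrix.single i j (1:ℝ))ᵀ) * Bᵀ) * Matrix.of W).trace)) μ := by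
    rw [htrsum]
    exact integrable_finset_sum _ (fun a _ => hint_sum a)
  -- value of the trace integral
  have htr_val : ∫ W, (((B * (Matrix.single i j (1:ℝ)
          + (Matrix.single i j (1:ℝ))ᵀ) * Bᵀ) * Matrix.of W).trace) ∂μ
      = 2 * (if i = j then (1:ℝ) else 0) := by
    rw [htrsum, integral_finset_sum _ (fun a _ => hint_sum a)]
    have h5 : ∀ a : Fin p, (∫ W, (∑ b : Fin p, (B * (Matrix.single i j (1:ℝ)
          + (Matrix.single i j (1:ℝ))ᵀ) * Bᵀ) a b * W b a) ∂μ)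
        = ∑ b : Fin p, (B * (Matrix.single i j (1:ℝ)
          + (Matrix.single i j (1:ℝ))ᵀ) * Bᵀ) a b * ((Bᵀ)⁻¹ * B⁻¹) b a := by
      intro a
      rw [integral_finset_sum _ (fun b _ => (hall b a).const_mul _)]
      refine Finset.sum_congr rfl fun b _ => ?_
      rw [integral_const_mul, hE' b a]
    rw [Finset.sum_congr rfl (fun a _ => h5 a)]
    have h6 : (∑ a : Fin p, ∑ b : Fin p, (B * (Matrix.single i j (1:ℝ)
          + (Matrix.single i j (1:ℝ))ᵀ) * Bᵀ) a b * ((Bᵀ)⁻¹ * B⁻¹) b a)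
        = ((B * (Matrix.single i j (1:ℝ)
          + (Matrix.single i j (1:ℝ))ᵀ) * Bᵀ) * ((Bᵀ)⁻¹ * B⁻¹)).trace := by
      rw [Matrix.trace]
      simp [Matrix.diag, Matrix.mul_apply]
    rw [h6]
    have hDM : (B * (Matrix.single i j (1:ℝ)
          + (Matrix.single i j (1:ℝ))ᵀ) * Bᵀ) * ((Bᵀ)⁻¹ * B⁻¹)
        = B * ((Matrix.single i j (1:ℝ) + (Matrix.single i j (1:ℝ))ᵀ) * B⁻¹) := by
      rw [show B * (Matrix.single i j (1:ℝ) + (Matrix.single i j (1:ℝ))ᵀ) * Bᵀ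
            * ((Bᵀ)⁻¹ * B⁻¹)
          = B * (Matrix.single i j (1:ℝ) + (Matrix.single i j (1:ℝ))ᵀ)
            * (Bᵀ * (Bᵀ)⁻¹) * B⁻¹ by simp only [Matrix.mul_assoc],
        Matrix.mul_nonsing_inv _ hBtdet, mul_one, Matrix.mul_assoc]
    rw [hDM, Matrix.trace_mul_comm, Matrix.mul_assoc, Matrix.nonsing_inv_mul _ hBdet,
      mul_one, Matrix.trace_add, Matrix.trace_transpose]
    rcases eq_or_ne i j with rfl | hij
    · rw [Matrix.trace_single_eq_same]
      norm_num
    · rw [Matrix.trace_single_eq_of_ne i j (1:ℝ) hij]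
      simp [hij]
  -- put it together
  rw [integral_const_mul,
    integral_sub (integrable_const (if i = j then (1:ℝ) else 0)) (htr_int.const_mul (1/2)),
    integral_const, integral_const_mul, htr_val]
  simp
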